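/- Let f be a G-surface with metric coefficients H₁, H₂, principal curvatures κ₁, κ₂ (all nonvanishing), and associated surface determined by functions h, l with δ ∈ {±1}, so that κ̂₁ = δκ₁/h, κ̂₂ = δκ₂/l and the G-condition (h-l)² = (H₂² + εH₁²)/(cH₁²H₂²) holds with c = 1. Define the dual curvatures κ₁* := δ̃δ·H₁²κ₁/(1 - h²H₁²) and κ₂* := δ̃δ·H₂²κ₂/(ε - l²H₂²) with δ̃ = δ. Then 1/(κ₁κ₂*) + 1/(κ₂κ₁*) = -2/(κ̂₁κ̂₂). -/

import Mathlib

/-- the dual surface of a G-surface satisfies the curvature relation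
1/(κ₁κ₂*) + 1/(κ₂κ₁*) = -2/(k1hatk2hat). Stated pointwise. -/
theorem stmt_4 (H₁ H₂ κ₁ κ₂ h l ε δ : ℝ)
    (hH₁ : 0 < H₁) (hH₂ : 0 < H₂)
    (hκ₁ : κ₁ ≠ 0) (hκ₂ : κ₂ ≠ 0) (hh : h ≠ 0) (hl : l ≠ 0)
    (hδ : δ = 1 ∨ δ = -1)
    (hd1 : 1 - h ^ 2 * H₁ ^ 2 ≠ 0) (hd2 : ε - l ^ 2 * H₂ ^ 2 ≠ 0)
    (hG : (h - l) ^ 2 = (H₂ ^ 2 + ε * H₁ ^ 2) / (H₁ ^ 2 * H₂ ^ 2))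
    (k1hat k2hat k1s k2s : ℝ)
    (h1 : k1hat = δ * κ₁ / h) (h2 : k2hat = δ * κ₂ / l)
    (h3 : k1s = δ * δ * (H₁ ^ 2 * κ₁) / (1 - h ^ 2 * H₁ ^ 2))
    (h4 : k2s = δ * δ * (H₂ ^ 2 * κ₂) / (ε - l ^ 2 * H₂ ^ 2)) :
    1 / (κ₁ * k2s) + 1 / (κ₂ * k1s) = -2 / (k1hat * k2hat) := by
  have hδ2 : δ * δ = 1 := by rcases hδ with h | h <;> rw [h] <;> ring
  have hδ0 : δ ≠ 0 := by rcases hδ with h | h <;> rw [h] <;> norm_num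
  have hH₁' : H₁ ≠ 0 := hH₁.ne'
  have hH₂' : H₂ ≠ 0 := hH₂.ne'
  have hG' : (h - l) ^ 2 * (H₁ ^ 2 * H₂ ^ 2) = H₂ ^ 2 + ε * H₁ ^ 2 := by
    rw [hG]; field_simp
  subst h1 h2 h3 h4
  rw [hδ2]
  field_simp
  linear_combination ((ε - l^2*H₂^2)*H₁^2 + (1-h^2*H₁^2)*H₂^2)*κ₁^2*κ₂^2 * hδ2 - κ₁^2*κ₂^2 * hG' + (1 - κ₁^2*κ₂^2) * ((ε*H₁^2 + H₂^2 - H₁^2*H₂^2*(h^2+l^2)) * hδ2 - hG')
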